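/- For real symmetric k×k matrices K and M with decreasingly sorted eigenvalues (α_i) and (β_i), the minimum of ‖P K P^⊤ − M‖_F² over the finite set of k×k permutation matrices P is at least ∑_{i=1}^k (α_i − β_i)². -/
import Mathlib


open Matrix BigOperators

/-- A 0-1 matrix with exactly one 1 in each row and each column. -/
def IsPermMatrix {k : ℕ} (P : Matrix (Fin k) (Fin k) ℝ) : Prop :=
  (∀ i j, P i j = 0 ∨ P i j = 1) ∧
  (∀ i, ∃! j, P i j = 1) ∧
  (∀ j, ∃! i, P i j = 1)

section Aux
open Finset


lemma tele (A : ℕ → ℝ) : ∀ m i : ℕ, i ≤ m → ∑ n ∈ Finset.Ico i m, (A n - A (n+1)) = A i - A m := by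
  intro m
  induction m with
  | zero => intro i h; simp [Nat.le_zero.mp h]
  | succ m ih =>
    intro i h
    rcases Nat.lt_or_ge i (m+1) with h' | h'
    · have hik : i ≤ m := Nat.lt_succ_iff.mp h'
      rw [Finset.sum_Ico_succ_top hik, ih i hik]; ring
    · have : i = m + 1 := le_antisymm h h'
      simp [this]

lemma indic_sum (k m : ℕ) (hm : m < k) :
    ∑ i ∈ range k, (if i ≤ m then (1:ℝ) else 0) = (m+1 : ℕ) := by
  rw [← Finset.sum_filter]
  have : (range k).filter (fun i => i ≤ m) = range (m+1) := by
    ext i; simp [Nat.lt_succ_iff]; omega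
  simp [this]

lemma sum4_swap (s : Finset ℕ) (f : ℕ→ℕ→ℕ→ℕ→ℝ) :
    ∑ i ∈ s, ∑ j ∈ s, ∑ p ∈ s, ∑ q ∈ s, f i j p q
    = ∑ p ∈ s, ∑ q ∈ s, ∑ i ∈ s, ∑ j ∈ s, f i j p q := by
  calc ∑ i ∈ s, ∑ j ∈ s, ∑ p ∈ s, ∑ q ∈ s, f i j p q
      = ∑ i ∈ s, ∑ p ∈ s, ∑ j ∈ s, ∑ q ∈ s, f i j p q := by
        exact Finset.sum_congr rfl (fun i _ => Finset.sum_comm)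
    _ = ∑ p ∈ s, ∑ i ∈ s, ∑ j ∈ s, ∑ q ∈ s, f i j p q := Finset.sum_comm
    _ = ∑ p ∈ s, ∑ i ∈ s, ∑ q ∈ s, ∑ j ∈ s, f i j p q := by
        exact Finset.sum_congr rfl (fun p _ => Finset.sum_congr rfl (fun i _ => Finset.sum_comm))
    _ = ∑ p ∈ s, ∑ q ∈ s, ∑ i ∈ s, ∑ j ∈ s, f i j p q := by
        exact Finset.sum_congr rfl (fun p _ => Finset.sum_comm)

lemma rearrange_nonneg (k : ℕ) (A B : ℕ → ℝ)
    (hA : ∀ m n, m ≤ n → n < k → A n ≤ A m) (hB : ∀ m n, m ≤ n → n < k → B n ≤ B m)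
    (hA0 : ∀ n, n < k → 0 ≤ A n) (hB0 : ∀ n, n < k → 0 ≤ B n)
    (S : ℕ → ℕ → ℝ) (hS : ∀ i j, 0 ≤ S i j)
    (hrow : ∀ i, i < k → ∑ j ∈ range k, S i j = 1)
    (hcol : ∀ j, j < k → ∑ i ∈ range k, S i j = 1) :
    ∑ i ∈ range k, ∑ j ∈ range k, A i * B j * S i j ≤ ∑ i ∈ range k, A i * B i := by
  set Ab : ℕ → ℝ := fun n => if n < k then A n else 0 with hAb
  set Bb : ℕ → ℝ := fun n => if n < k then B n else 0 with hBb
  set a : ℕ → ℝ := fun n => Ab n - Ab (n+1) with ha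
  set b : ℕ → ℝ := fun n => Bb n - Bb (n+1) with hb
  have ha0 : ∀ n, n < k → 0 ≤ a n := by
    intro n hn
    simp only [ha, hAb]
    by_cases h : n + 1 < k
    · simp [hn, h]; exact hA n (n+1) (by omega) h
    · simp [hn, h]; exact hA0 n hn
  have hb0 : ∀ n, n < k → 0 ≤ b n := by
    intro n hn
    simp only [hb, hBb]
    by_cases h : n + 1 < k
    · simp [hn, h]; exact hB n (n+1) (by omega) h
    · simp [hn, h]; exact hB0 n hn
  have key : ∀ (c : ℕ → ℝ), ∀ i, i < k →
      (∑ p ∈ range k, (if i ≤ p then c p else 0)) = ∑ p ∈ Ico i k, c p := by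
    intro c i hi
    rw [← Finset.sum_filter]
    congr 1
    ext p; simp [Finset.mem_Ico]; omega
  have keyA : ∀ i, i < k → A i = ∑ p ∈ range k, (if i ≤ p then a p else 0) := by
    intro i hi
    rw [key a i hi, tele Ab k i (le_of_lt hi)]
    simp [hAb, hi]
  have keyB : ∀ i, i < k → B i = ∑ p ∈ range k, (if i ≤ p then b p else 0) := by
    intro i hi
    rw [key b i hi, tele Bb k i (le_of_lt hi)]
    simp [hBb, hi]
  -- the coupled sums
  set U : ℕ → ℕ → ℝ := fun p q => ∑ i ∈ range k, ∑ j ∈ range k,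
      (if i ≤ p then (1:ℝ) else 0) * (if j ≤ q then (1:ℝ) else 0) * S i j with hU
  set U0 : ℕ → ℕ → ℝ := fun p q => ∑ i ∈ range k,
      (if i ≤ p then (1:ℝ) else 0) * (if i ≤ q then (1:ℝ) else 0) with hU0
  have hL : ∑ i ∈ range k, ∑ j ∈ range k, A i * B j * S i j
      = ∑ p ∈ range k, ∑ q ∈ range k, a p * b q * U p q := by
    have e1 : ∑ i ∈ range k, ∑ j ∈ range k, A i * B j * S i j
        = ∑ i ∈ range k, ∑ j ∈ range k, ∑ p ∈ range k, ∑ q ∈ range k,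
            ((if i ≤ p then a p else 0) * (if j ≤ q then b q else 0) * S i j) := by
      apply Finset.sum_congr rfl; intro i hi
      apply Finset.sum_congr rfl; intro j hj
      rw [keyA i (mem_range.mp hi), keyB j (mem_range.mp hj)]
      rw [Finset.sum_mul_sum, Finset.sum_mul]
      apply Finset.sum_congr rfl; intro p _
      rw [Finset.sum_mul]
    rw [e1, sum4_swap]
    apply Finset.sum_congr rfl; intro p _
    apply Finset.sum_congr rfl; intro q _
    rw [hU]
    rw [Finset.mul_sum]
    apply Finset.sum_congr rfl; intro i _
    rw [Finset.mul_sum]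
    apply Finset.sum_congr rfl; intro j _
    split_ifs <;> ring
  have hR : ∑ i ∈ range k, A i * B i
      = ∑ p ∈ range k, ∑ q ∈ range k, a p * b q * U0 p q := by
    have e1 : ∑ i ∈ range k, A i * B i
        = ∑ i ∈ range k, ∑ p ∈ range k, ∑ q ∈ range k,
            ((if i ≤ p then a p else 0) * (if i ≤ q then b q else 0)) := by
      apply Finset.sum_congr rfl; intro i hi
      rw [keyA i (mem_range.mp hi), keyB i (mem_range.mp hi)]
      rw [Finset.sum_mul_sum]
    rw [e1, Finset.sum_comm]
    apply Finset.sum_congr rfl; intro p _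
    rw [Finset.sum_comm]
    apply Finset.sum_congr rfl; intro q _
    rw [hU0, Finset.mul_sum]
    apply Finset.sum_congr rfl; intro i _
    split_ifs <;> ring
  rw [hL, hR]
  apply Finset.sum_le_sum; intro p hp
  apply Finset.sum_le_sum; intro q hq
  have hpk := mem_range.mp hp
  have hqk := mem_range.mp hq
  -- U0 p q = min p q + 1
  have hU0v : U0 p q = ((min p q : ℕ) + 1 : ℕ) := by
    rw [hU0]
    have : ∀ i, (if i ≤ p then (1:ℝ) else 0) * (if i ≤ q then (1:ℝ) else 0)
        = (if i ≤ min p q then (1:ℝ) else 0) := by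
      intro i
      rcases Nat.le_total p q with h | h
      · rw [min_eq_left h]; split_ifs <;> (first | ring1 | (exfalso; omega))
      · rw [min_eq_right h]; split_ifs <;> (first | ring1 | (exfalso; omega))
    simp_rw [this]
    exact indic_sum k (min p q) (by omega)
  -- U p q ≤ p + 1
  have hUp : U p q ≤ ((p : ℕ) + 1 : ℕ) := by
    rw [hU]
    calc ∑ i ∈ range k, ∑ j ∈ range k,
          (if i ≤ p then (1:ℝ) else 0) * (if j ≤ q then (1:ℝ) else 0) * S i j
        ≤ ∑ i ∈ range k, ∑ j ∈ range k, (if i ≤ p then (1:ℝ) else 0) * S i j := by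
          apply Finset.sum_le_sum; intro i _
          apply Finset.sum_le_sum; intro j _
          have := hS i j
          split_ifs <;> simp <;> linarith
      _ = ∑ i ∈ range k, (if i ≤ p then (1:ℝ) else 0) * ∑ j ∈ range k, S i j := by
          apply Finset.sum_congr rfl; intro i _
          rw [Finset.mul_sum]
      _ = ∑ i ∈ range k, (if i ≤ p then (1:ℝ) else 0) := by
          apply Finset.sum_congr rfl; intro i hi
          rw [hrow i (mem_range.mp hi), mul_one]
      _ = ((p : ℕ) + 1 : ℕ) := indic_sum k p hpk
  have hUq : U p q ≤ ((q : ℕ) + 1 : ℕ) := by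
    rw [hU]
    calc ∑ i ∈ range k, ∑ j ∈ range k,
          (if i ≤ p then (1:ℝ) else 0) * (if j ≤ q then (1:ℝ) else 0) * S i j
        ≤ ∑ i ∈ range k, ∑ j ∈ range k, (if j ≤ q then (1:ℝ) else 0) * S i j := by
          apply Finset.sum_le_sum; intro i _
          apply Finset.sum_le_sum; intro j _
          have := hS i j
          split_ifs <;> simp <;> linarith
      _ = ∑ j ∈ range k, ∑ i ∈ range k, (if j ≤ q then (1:ℝ) else 0) * S i j := Finset.sum_comm
      _ = ∑ j ∈ range k, (if j ≤ q then (1:ℝ) else 0) * ∑ i ∈ range k, S i j := by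
          apply Finset.sum_congr rfl; intro j _
          rw [Finset.mul_sum]
      _ = ∑ j ∈ range k, (if j ≤ q then (1:ℝ) else 0) := by
          apply Finset.sum_congr rfl; intro j hj
          rw [hcol j (mem_range.mp hj), mul_one]
      _ = ((q : ℕ) + 1 : ℕ) := indic_sum k q hqk
  have hUle : U p q ≤ U0 p q := by
    rw [hU0v]
    rcases le_total p q with h | h
    · calc U p q ≤ ((p:ℕ)+1:ℕ) := hUp
        _ = ((min p q : ℕ) + 1 : ℕ) := by rw [min_eq_left h]
    · calc U p q ≤ ((q:ℕ)+1:ℕ) := hUq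
        _ = ((min p q : ℕ) + 1 : ℕ) := by rw [min_eq_right h]
  exact mul_le_mul_of_nonneg_left hUle (mul_nonneg (ha0 p hpk) (hb0 q hqk))

lemma rearrange (k : ℕ) (A B : ℕ → ℝ)
    (hA : ∀ m n, m ≤ n → n < k → A n ≤ A m) (hB : ∀ m n, m ≤ n → n < k → B n ≤ B m)
    (S : ℕ → ℕ → ℝ) (hS : ∀ i j, 0 ≤ S i j)
    (hrow : ∀ i, i < k → ∑ j ∈ range k, S i j = 1)
    (hcol : ∀ j, j < k → ∑ i ∈ range k, S i j = 1) :
    ∑ i ∈ range k, ∑ j ∈ range k, A i * B j * S i j ≤ ∑ i ∈ range k, A i * B i := by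
  rcases Nat.eq_zero_or_pos k with rfl | hk
  · simp
  set c := A (k-1) with hc
  set d := B (k-1) with hd
  set A' : ℕ → ℝ := fun n => A n - c with hA'
  set B' : ℕ → ℝ := fun n => B n - d with hB'
  have hA'anti : ∀ m n, m ≤ n → n < k → A' n ≤ A' m := by
    intro m n hmn hn; simp only [hA']; have := hA m n hmn hn; linarith
  have hB'anti : ∀ m n, m ≤ n → n < k → B' n ≤ B' m := by
    intro m n hmn hn; simp only [hB']; have := hB m n hmn hn; linarith
  have hA'0 : ∀ n, n < k → 0 ≤ A' n := by
    intro n hn; simp only [hA', hc]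
    have := hA n (k-1) (by omega) (by omega); linarith
  have hB'0 : ∀ n, n < k → 0 ≤ B' n := by
    intro n hn; simp only [hB', hd]
    have := hB n (k-1) (by omega) (by omega); linarith
  have hmain := rearrange_nonneg k A' B' hA'anti hB'anti hA'0 hB'0 S hS hrow hcol
  have hsum1 : ∑ i ∈ range k, ∑ j ∈ range k, B' j * S i j = ∑ j ∈ range k, B' j := by
    rw [Finset.sum_comm]
    apply Finset.sum_congr rfl; intro j hj
    rw [← Finset.mul_sum, hcol j (mem_range.mp hj), mul_one]
  have hsum2 : ∑ i ∈ range k, ∑ j ∈ range k, A' i * S i j = ∑ i ∈ range k, A' i := by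
    apply Finset.sum_congr rfl; intro i hi
    rw [← Finset.mul_sum, hrow i (mem_range.mp hi), mul_one]
  have hsum3 : ∑ i ∈ range k, ∑ j ∈ range k, S i j = k := by
    rw [Finset.sum_congr rfl (fun i hi => hrow i (mem_range.mp hi))]
    simp
  have eqL : ∑ i ∈ range k, ∑ j ∈ range k, A i * B j * S i j
      = (∑ i ∈ range k, ∑ j ∈ range k, A' i * B' j * S i j)
        + c * (∑ j ∈ range k, B' j) + d * (∑ i ∈ range k, A' i) + c * d * k := by
    have pw : ∀ i j, A i * B j * S i j
        = A' i * B' j * S i j + c * (B' j * S i j) + d * (A' i * S i j) + c * d * S i j := by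
      intro i j; simp only [hA', hB']; ring
    simp_rw [pw, Finset.sum_add_distrib, ← Finset.mul_sum]
    rw [hsum3]
    have h2 : ∑ i ∈ range k, A' i * ∑ j ∈ range k, S i j = ∑ i ∈ range k, A' i := by
      apply Finset.sum_congr rfl; intro i hi
      rw [hrow i (mem_range.mp hi), mul_one]
    rw [h2, hsum1]
  have eqR : ∑ i ∈ range k, A i * B i
      = (∑ i ∈ range k, A' i * B' i)
        + c * (∑ j ∈ range k, B' j) + d * (∑ i ∈ range k, A' i) + c * d * k := by
    have pw : ∀ i, A i * B i = A' i * B' i + c * B' i + d * A' i + c * d := by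
      intro i; simp only [hA', hB']; ring
    rw [Finset.sum_congr rfl (fun i _ => pw i), Finset.sum_add_distrib,
      Finset.sum_add_distrib, Finset.sum_add_distrib, ← Finset.mul_sum, ← Finset.mul_sum,
      Finset.sum_const, Finset.card_range]
    push_cast; ring
  linarith

lemma perm_orth {k : ℕ} (P : Matrix (Fin k) (Fin k) ℝ) (hP : IsPermMatrix P) :
    Pᵀ * P = 1 := by
  obtain ⟨h01, hrow, hcol⟩ := hP
  ext j l
  rw [Matrix.mul_apply, Matrix.one_apply]
  by_cases hjl : j = l
  · subst hjl
    obtain ⟨i0, hi0, hi0u⟩ := hcol j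
    rw [if_pos rfl, Finset.sum_eq_single i0]
    · simp [Matrix.transpose_apply, hi0]
    · intro i _ hne
      rcases h01 i j with h | h
      · simp [Matrix.transpose_apply, h]
      · exact absurd (hi0u i h) hne
    · simp
  · rw [if_neg hjl]
    apply Finset.sum_eq_zero
    intro i _
    rcases h01 i j with h | h
    · simp [Matrix.transpose_apply, h]
    · rcases h01 i l with h' | h'
      · simp [Matrix.transpose_apply, h']
      · obtain ⟨j0, hj0, hj0u⟩ := hrow i
        exact absurd ((hj0u j h).trans (hj0u l h').symm) hjl

lemma trace_diag_mul {k : ℕ} (α : Fin k → ℝ) (N : Matrix (Fin k) (Fin k) ℝ) :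
    Matrix.trace (Matrix.diagonal α * N) = ∑ i, α i * N i i := by
  simp [Matrix.trace, Matrix.diag, Matrix.diagonal_mul]

lemma conj_diag_apply {k : ℕ} (W : Matrix (Fin k) (Fin k) ℝ) (β : Fin k → ℝ) (i : Fin k) :
    (W * Matrix.diagonal β * Wᵀ) i i = ∑ j, β j * (W i j * W i j) := by
  rw [Matrix.mul_apply]
  apply Finset.sum_congr rfl; intro j _
  rw [Matrix.mul_diagonal, Matrix.transpose_apply]; ring

lemma trace_diag_diag {k : ℕ} (α : Fin k → ℝ) :
    Matrix.trace (Matrix.diagonal α * Matrix.diagonal α) = ∑ i, α i * α i := by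
  rw [Matrix.diagonal_mul_diagonal, Matrix.trace_diagonal]

lemma conjMulLem {k : ℕ} (V X Y : Matrix (Fin k) (Fin k) ℝ) (h : Vᵀ * V = 1) :
    (V * X * Vᵀ) * (V * Y * Vᵀ) = V * (X * Y) * Vᵀ := by
  calc (V * X * Vᵀ) * (V * Y * Vᵀ) = V * X * (Vᵀ * V) * (Y * Vᵀ) := by
        simp only [Matrix.mul_assoc]
    _ = V * (X * Y) * Vᵀ := by rw [h, Matrix.mul_one]; simp only [Matrix.mul_assoc]

lemma trace_conj {k : ℕ} (V Z : Matrix (Fin k) (Fin k) ℝ) (h : Vᵀ * V = 1) :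
    Matrix.trace (V * Z * Vᵀ) = Matrix.trace Z := by
  rw [Matrix.trace_mul_comm, ← Matrix.mul_assoc, h, Matrix.one_mul]


lemma frob_bound {k : ℕ} (α β : Fin k → ℝ) (hα : Antitone α) (hβ : Antitone β)
    (V UM : Matrix (Fin k) (Fin k) ℝ) (hVVt : V * Vᵀ = 1) (hUM : UM * UMᵀ = 1) :
    ∑ i, ∑ j, ((V * Matrix.diagonal α * Vᵀ - UM * Matrix.diagonal β * UMᵀ) i j) ^ 2
      ≥ ∑ i, (α i - β i) ^ 2 := by
  have hVtV : Vᵀ * V = 1 := mul_eq_one_comm.mp hVVt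
  have hUMtUM : UMᵀ * UM = 1 := mul_eq_one_comm.mp hUM
  set A : Matrix (Fin k) (Fin k) ℝ := V * Matrix.diagonal α * Vᵀ with hA
  set M : Matrix (Fin k) (Fin k) ℝ := UM * Matrix.diagonal β * UMᵀ with hMdec
  set W : Matrix (Fin k) (Fin k) ℝ := Vᵀ * UM with hW
  have hVW : V * W = UM := by rw [hW, ← Matrix.mul_assoc, hVVt, Matrix.one_mul]
  have hM' : M = V * (W * Matrix.diagonal β * Wᵀ) * Vᵀ := by
    have h1 : V * (W * Matrix.diagonal β * Wᵀ) * Vᵀ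
        = (V * W) * Matrix.diagonal β * (V * W)ᵀ := by
      simp only [Matrix.transpose_mul, Matrix.mul_assoc]
    rw [h1, hVW, hMdec]
  have hWWt : W * Wᵀ = 1 := by
    rw [hW, Matrix.transpose_mul, Matrix.transpose_transpose,
      show Vᵀ * UM * (UMᵀ * V) = Vᵀ * (UM * UMᵀ) * V by simp only [Matrix.mul_assoc],
      hUM, Matrix.mul_one, hVtV]
  have hWtW : Wᵀ * W = 1 := mul_eq_one_comm.mp hWWt
  have hrowW : ∀ i, ∑ j, W i j * W i j = 1 := by
    intro i
    have h := congrFun (congrFun hWWt i) i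
    rw [Matrix.mul_apply, Matrix.one_apply_eq] at h
    simpa [Matrix.transpose_apply] using h
  have hcolW : ∀ j, ∑ i, W i j * W i j = 1 := by
    intro j
    have h := congrFun (congrFun hWtW j) j
    rw [Matrix.mul_apply, Matrix.one_apply_eq] at h
    simpa [Matrix.transpose_apply, mul_comm] using h
  have hAsymm : Aᵀ = A := by
    rw [hA]
    simp only [Matrix.transpose_mul, Matrix.transpose_transpose,
      Matrix.diagonal_transpose, Matrix.mul_assoc]
  have hMsymm : Mᵀ = M := by
    rw [hMdec]
    simp only [Matrix.transpose_mul, Matrix.transpose_transpose,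
      Matrix.diagonal_transpose, Matrix.mul_assoc]
  have hAsym' : ∀ i j, A j i = A i j := by
    intro i j
    conv_rhs => rw [← hAsymm]
    rfl
  have hMsym' : ∀ i j, M j i = M i j := by
    intro i j
    conv_rhs => rw [← hMsymm]
    rfl
  -- trace identities
  have trAA : ∑ i, ∑ j, A i j * A i j = ∑ i, α i * α i := by
    have e1 : ∑ i, ∑ j, A i j * A i j = Matrix.trace (A * A) := by
      rw [Matrix.trace]
      simp only [Matrix.diag, Matrix.mul_apply]
      exact Finset.sum_congr rfl fun i _ => Finset.sum_congr rfl fun j _ => by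
        rw [hAsym' i j]
    rw [e1, hA, conjMulLem _ _ _ hVtV, trace_conj _ _ hVtV, trace_diag_diag]
  have trMM : ∑ i, ∑ j, M i j * M i j = ∑ i, β i * β i := by
    have e1 : ∑ i, ∑ j, M i j * M i j = Matrix.trace (M * M) := by
      rw [Matrix.trace]
      simp only [Matrix.diag, Matrix.mul_apply]
      exact Finset.sum_congr rfl fun i _ => Finset.sum_congr rfl fun j _ => by
        rw [hMsym' i j]
    rw [e1, hMdec,
      show UM * Matrix.diagonal β * UMᵀ * (UM * Matrix.diagonal β * UMᵀ)
          = UM * (Matrix.diagonal β * Matrix.diagonal β) * UMᵀ from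
        conjMulLem _ _ _ hUMtUM,
      trace_conj _ _ hUMtUM, trace_diag_diag]
  have trAM : ∑ i, ∑ j, A i j * M i j = ∑ i, ∑ j, α i * β j * (W i j * W i j) := by
    have e1 : ∑ i, ∑ j, A i j * M i j = Matrix.trace (A * M) := by
      rw [Matrix.trace]
      simp only [Matrix.diag, Matrix.mul_apply]
      exact Finset.sum_congr rfl fun i _ => Finset.sum_congr rfl fun j _ => by
        rw [hMsym' i j]
    rw [e1, hA, hM', conjMulLem _ _ _ hVtV, trace_conj _ _ hVtV, trace_diag_mul]
    apply Finset.sum_congr rfl; intro i _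
    rw [conj_diag_apply, Finset.mul_sum]
    apply Finset.sum_congr rfl; intro j _
    ring
  -- the rearrangement inequality, transported to Fin k
  have hre : ∑ i, ∑ j, α i * β j * (W i j * W i j) ≤ ∑ i, α i * β i := by
    classical
    set Ae : ℕ → ℝ := fun n => if h : n < k then α ⟨n, h⟩ else 0 with hAe
    set Be : ℕ → ℝ := fun n => if h : n < k then β ⟨n, h⟩ else 0 with hBe
    set Se : ℕ → ℕ → ℝ := fun n m =>
      if h : n < k ∧ m < k then W ⟨n, h.1⟩ ⟨m, h.2⟩ * W ⟨n, h.1⟩ ⟨m, h.2⟩ else 0 with hSe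
    have hAeanti : ∀ m n, m ≤ n → n < k → Ae n ≤ Ae m := by
      intro m n hmn hn
      have hm : m < k := lt_of_le_of_lt hmn hn
      simp only [hAe, dif_pos hn, dif_pos hm]
      exact hα (show (⟨m, hm⟩ : Fin k) ≤ ⟨n, hn⟩ from hmn)
    have hBeanti : ∀ m n, m ≤ n → n < k → Be n ≤ Be m := by
      intro m n hmn hn
      have hm : m < k := lt_of_le_of_lt hmn hn
      simp only [hBe, dif_pos hn, dif_pos hm]
      exact hβ (show (⟨m, hm⟩ : Fin k) ≤ ⟨n, hn⟩ from hmn)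
    have hSe0 : ∀ n m, 0 ≤ Se n m := by
      intro n m
      simp only [hSe]
      split
      · exact mul_self_nonneg _
      · exact le_rfl
    have hSerow : ∀ n, n < k → ∑ m ∈ range k, Se n m = 1 := by
      intro n hn
      rw [← Fin.sum_univ_eq_sum_range (fun m => Se n m) k]
      have : ∀ j : Fin k, Se n j.val = W ⟨n, hn⟩ j * W ⟨n, hn⟩ j := by
        intro j
        simp only [hSe, dif_pos (And.intro hn j.isLt), Fin.eta]
      rw [Finset.sum_congr rfl fun j _ => this j]
      exact hrowW ⟨n, hn⟩
    have hSecol : ∀ m, m < k → ∑ n ∈ range k, Se n m = 1 := by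
      intro m hm
      rw [← Fin.sum_univ_eq_sum_range (fun n => Se n m) k]
      have : ∀ i : Fin k, Se i.val m = W i ⟨m, hm⟩ * W i ⟨m, hm⟩ := by
        intro i
        simp only [hSe, dif_pos (And.intro i.isLt hm), Fin.eta]
      rw [Finset.sum_congr rfl fun i _ => this i]
      exact hcolW ⟨m, hm⟩
    have hmain := rearrange k Ae Be hAeanti hBeanti Se hSe0 hSerow hSecol
    have eL : ∑ i, ∑ j, α i * β j * (W i j * W i j)
        = ∑ n ∈ range k, ∑ m ∈ range k, Ae n * Be m * Se n m := by
      rw [← Fin.sum_univ_eq_sum_range (fun n => ∑ m ∈ range k, Ae n * Be m * Se n m) k]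
      apply Finset.sum_congr rfl; intro i _
      rw [← Fin.sum_univ_eq_sum_range (fun m => Ae i.val * Be m * Se i.val m) k]
      apply Finset.sum_congr rfl; intro j _
      simp only [hAe, hBe, hSe, dif_pos i.isLt, dif_pos j.isLt,
        dif_pos (And.intro i.isLt j.isLt), Fin.eta]
    have eR : ∑ i, α i * β i = ∑ n ∈ range k, Ae n * Be n := by
      rw [← Fin.sum_univ_eq_sum_range (fun n => Ae n * Be n) k]
      apply Finset.sum_congr rfl; intro i _
      simp only [hAe, hBe, dif_pos i.isLt, Fin.eta]
    rw [eL, eR]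
    exact hmain
  -- put everything together
  have expand : ∑ i, ∑ j, ((A - M) i j) ^ 2
      = (∑ i, ∑ j, A i j * A i j) - 2 * (∑ i, ∑ j, A i j * M i j)
        + (∑ i, ∑ j, M i j * M i j) := by
    have e : ∀ i j : Fin k, ((A - M) i j) ^ 2
        = A i j * A i j - 2 * (A i j * M i j) + M i j * M i j := by
      intro i j; rw [Matrix.sub_apply]; ring
    simp_rw [e, Finset.sum_add_distrib, Finset.sum_sub_distrib, ← Finset.mul_sum]
  have hid : ∑ i, (α i - β i) ^ 2
      = (∑ i, α i * α i) - 2 * (∑ i, α i * β i) + (∑ i, β i * β i) := by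
    have e : ∀ i : Fin k, (α i - β i) ^ 2
        = α i * α i - 2 * (α i * β i) + β i * β i := by
      intro i; ring
    simp_rw [e, Finset.sum_add_distrib, Finset.sum_sub_distrib, ← Finset.mul_sum]
  rw [ge_iff_le, hid, expand, trAA, trMM, trAM]
  linarith [hre]


end Aux

/-- The spectral value `∑ i, (α i - β i)²` is a lower bound for the exact
combinatorial matching objective over permutation matrices. -/
theorem perm_matching_lower_bound {k : ℕ}
    (K M : Matrix (Fin k) (Fin k) ℝ)
    (hK : K.IsSymm) (hM : M.IsSymm)
    (α β : Fin k → ℝ) (hα : Antitone α) (hβ : Antitone β)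
    (UK UM : Matrix (Fin k) (Fin k) ℝ)
    (hUK : UK * UKᵀ = 1) (hUM : UM * UMᵀ = 1)
    (hKdec : K = UK * Matrix.diagonal α * UKᵀ)
    (hMdec : M = UM * Matrix.diagonal β * UMᵀ) :
    ∀ P : Matrix (Fin k) (Fin k) ℝ, IsPermMatrix P →
      ∑ i, ∑ j, ((P * K * Pᵀ - M) i j) ^ 2 ≥ ∑ i, (α i - β i) ^ 2 := by
  intro P hP
  have hPtP : Pᵀ * P = 1 := perm_orth P hP
  have hPPt : P * Pᵀ = 1 := mul_eq_one_comm.mp hPtP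
  have hVVt : (P * UK) * (P * UK)ᵀ = 1 := by
    rw [Matrix.transpose_mul,
      show P * UK * (UKᵀ * Pᵀ) = P * (UK * UKᵀ) * Pᵀ by simp only [Matrix.mul_assoc],
      hUK, Matrix.mul_one, hPPt]
  have hPK : P * K * Pᵀ = (P * UK) * Matrix.diagonal α * (P * UK)ᵀ := by
    rw [hKdec]
    simp only [Matrix.transpose_mul, Matrix.mul_assoc]
  rw [hPK, hMdec]
  exact frob_bound α β hα hβ (P * UK) UM hVVt hUM
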